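/- For positive integers r and s and any partition λ, the s-core of λ equals the s-core of the rs-core of λ. In particular, every s-core is also an rs-core. -/

import Mathlib

open Classical

/-- A partition: an infinite weakly decreasing sequence of non-negative integers
with finite sum.  Here `f n` denotes the part `λ_{n+1}`. -/
structure BetaPartition where
  f : ℕ → ℕ
  antitone : ∀ ⦃m n : ℕ⦄, m ≤ n → f n ≤ f m
  eventually_zero : ∃ N, ∀ n, N ≤ n → f n = 0

instance : Inhabited BetaPartition :=
  ⟨⟨fun _ => 0, fun _ _ _ => le_rfl, ⟨0, fun _ _ => rfl⟩⟩⟩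

namespace BetaPartition

/-- The beta-set `β_r(λ) = {λ_i - i + r : i ≥ 1}`. -/
def beta (r : ℤ) (l : BetaPartition) : Set ℤ :=
  {x | ∃ n : ℕ, x = (l.f n : ℤ) - (n + 1) + r}

/-- The size `|λ|` of a partition. -/
noncomputable def size (l : BetaPartition) : ℕ := ∑ᶠ n, l.f n

/-- The partition whose beta-set (for some shift `r`) is `B`, if it exists. -/
noncomputable def ofBeta (B : Set ℤ) : BetaPartition :=
  if h : ∃ l : BetaPartition, ∃ r : ℤ, beta r l = B then h.choose else default

/-- The beta-set of the `s`-core: beads pushed up their runners as far as possible.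
A position `x` is occupied iff the number of beads of `B` weakly above it on its runner
exceeds the number of gaps strictly below it on its runner. -/
def coreBeta (s : ℕ) (B : Set ℤ) : Set ℤ :=
  {x | ({y : ℤ | y ∉ B ∧ y ≡ x [ZMOD (s : ℤ)] ∧ y < x}).ncard
      < ({b : ℤ | b ∈ B ∧ b ≡ x [ZMOD (s : ℤ)] ∧ x ≤ b}).ncard}

/-- The `s`-core of a partition. -/
noncomputable def core (s : ℕ) (l : BetaPartition) : BetaPartition :=
  ofBeta (coreBeta s (beta 0 l))

/-- `λ` is an `s`-core. -/
def IsCore (s : ℕ) (l : BetaPartition) : Prop := core s l = l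

/-- The `s`-weight of `λ`. -/
noncomputable def wt (s : ℕ) (l : BetaPartition) : ℕ := (size l - size (core s l)) / s

/-- The component of the `s`-quotient of `λ` indexed by `j : ZMod s`. -/
noncomputable def quot (s : ℕ) (l : BetaPartition) (j : ZMod s) : BetaPartition :=
  ofBeta {z : ℤ | ((j.val : ℤ) + (s : ℤ) * z) ∈ beta 0 l}

/-- The `s`-set entry `Γ_j(λ)`: the smallest integer in the class `j` mod `s`
not lying in the beta-set of the `s`-core of `λ`. -/
noncomputable def sSet (s : ℕ) (l : BetaPartition) (j : ZMod s) : ℤ :=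
  sInf {x : ℤ | (x : ZMod s) = j ∧ x ∉ beta 0 (core s l)}

/-- `λ` is an `[s:t]`-core. -/
def IsGenCore (s t : ℕ) (l : BetaPartition) : Prop :=
  wt s (core t l) = wt s l

/-- The level `t` action of the generator `w_i` of the affine symmetric group `W_s` on `ℤ`. -/
def genActZ (s t : ℕ) (i : ZMod s) (n : ℤ) : ℤ :=
  if (n : ZMod s) = (i - 1) * (t : ZMod s) - ((((s : ℤ) - 1) * ((t : ℤ) - 1) / 2 : ℤ) : ZMod s)
    then n + t
  else if (n : ZMod s) = i * (t : ZMod s) - ((((s : ℤ) - 1) * ((t : ℤ) - 1) / 2 : ℤ) : ZMod s)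
    then n - t
  else n

/-- The level `t` action of the generator `w_i` of `W_s` on partitions, via beta-sets. -/
noncomputable def genAct (s t : ℕ) (i : ZMod s) (l : BetaPartition) : BetaPartition :=
  ofBeta (genActZ s t i '' beta 0 l)

/-- The action of a word in the generators of `W_s`, at level `t`, on partitions. -/
noncomputable def wordAct (s t : ℕ) (w : List (ZMod s)) (l : BetaPartition) : BetaPartition :=
  w.foldr (genAct s t) l

/-- `λ` and `μ` lie in the same orbit for the level `t` action of `W_s`. -/
def SameOrbit (s t : ℕ) (l m : BetaPartition) : Prop :=
  ∃ w : List (ZMod s), wordAct s t w l = m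

/-- `λ` and `μ` lie in the same orbit for the commuting actions of `W_s` (level `t`)
and `W_t` (level `s`). -/
def SameOrbit2 (s t : ℕ) (l m : BetaPartition) : Prop :=
  ∃ a : List (ZMod s), ∃ b : List (ZMod t), wordAct s t a (wordAct t s b l) = m

/-- The `t`-weighted `s`-quotient of `λ`: the multiset of pairs
`(Γ_i(λ) + tℤ, λ^(i))` over `i ∈ ℤ/sℤ`. -/
noncomputable def twq (s t : ℕ) (l : BetaPartition) : Multiset (ZMod t × BetaPartition) :=
  ((List.range s).map (fun i =>
    (((sSet s l (i : ZMod s) : ℤ) : ZMod t), quot s l (i : ZMod s))) : Multiset _)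

/-- The largest `(s,t)`-core `κ_{s,t}`: the partition whose beta-set is the set of
integers not expressible as a non-negative integer combination of `s` and `t`. -/
noncomputable def kappa (s t : ℕ) : BetaPartition :=
  ofBeta {x : ℤ | ¬ ∃ a b : ℕ, x = (a : ℤ) * s + (b : ℤ) * t}

end BetaPartition
open BetaPartition

/-- A set of integers is beta-like: contains all sufficiently negative integers,
excludes all sufficiently positive ones. -/
def Ok (B : Set ℤ) : Prop :=
  (∃ M : ℤ, ∀ x ≤ M, x ∈ B) ∧ (∃ M : ℤ, ∀ x : ℤ, M ≤ x → x ∉ B)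

def gapsSet (B : Set ℤ) (t : ℕ) (a x : ℤ) : Set ℤ :=
  {y | y ∉ B ∧ y ≡ a [ZMOD (t : ℤ)] ∧ y < x}

def beadsSet (B : Set ℤ) (t : ℕ) (a x : ℤ) : Set ℤ :=
  {b | b ∈ B ∧ b ≡ a [ZMOD (t : ℤ)] ∧ x ≤ b}

noncomputable def Hfn (B : Set ℤ) (t : ℕ) (a x : ℤ) : ℤ :=
  ((beadsSet B t a x).ncard : ℤ) - ((gapsSet B t a x).ncard : ℤ)

lemma coreBeta_eq (t : ℕ) (B : Set ℤ) :
    coreBeta t B = {x | (gapsSet B t x x).ncard < (beadsSet B t x x).ncard} := rfl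

lemma mem_coreBeta {t : ℕ} {B : Set ℤ} {x : ℤ} :
    x ∈ coreBeta t B ↔ 0 < Hfn B t x x := by
  rw [coreBeta_eq]
  simp only [Set.mem_setOf_eq, Hfn]
  omega

lemma finite_beads {B : Set ℤ} (hB : Ok B) (t : ℕ) (a x : ℤ) :
    (beadsSet B t a x).Finite := by
  obtain ⟨M, hM⟩ := hB.2
  apply Set.Finite.subset (Set.finite_Icc x M)
  rintro b ⟨hb, -, hxb⟩
  exact ⟨hxb, by by_contra h; exact hM b (by omega) hb⟩

lemma finite_gaps {B : Set ℤ} (hB : Ok B) (t : ℕ) (a x : ℤ) :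
    (gapsSet B t a x).Finite := by
  obtain ⟨M, hM⟩ := hB.1
  apply Set.Finite.subset (Set.finite_Icc M x)
  rintro y ⟨hy, -, hyx⟩
  exact ⟨by by_contra h; exact hy (hM y (by omega)), by omega⟩

lemma gapsSet_congr {B : Set ℤ} {t : ℕ} {a a' : ℤ} (h : a ≡ a' [ZMOD (t : ℤ)]) (x : ℤ) :
    gapsSet B t a x = gapsSet B t a' x := by
  ext y
  exact ⟨fun ⟨h1, h2, h3⟩ => ⟨h1, h2.trans h, h3⟩, fun ⟨h1, h2, h3⟩ => ⟨h1, h2.trans h.symm, h3⟩⟩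

lemma beadsSet_congr {B : Set ℤ} {t : ℕ} {a a' : ℤ} (h : a ≡ a' [ZMOD (t : ℤ)]) (x : ℤ) :
    beadsSet B t a x = beadsSet B t a' x := by
  ext y
  exact ⟨fun ⟨h1, h2, h3⟩ => ⟨h1, h2.trans h, h3⟩, fun ⟨h1, h2, h3⟩ => ⟨h1, h2.trans h.symm, h3⟩⟩

lemma Hfn_congr {B : Set ℤ} {t : ℕ} {a a' : ℤ} (h : a ≡ a' [ZMOD (t : ℤ)]) (x : ℤ) :
    Hfn B t a x = Hfn B t a' x := by
  rw [Hfn, Hfn, gapsSet_congr h, beadsSet_congr h]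

/-- step lemma -/
lemma Hfn_step {B : Set ℤ} (hB : Ok B) (t : ℕ) (a : ℤ) {x q : ℤ} (hxq : x ≤ q) :
    Hfn B t a x = Hfn B t a q + (({y : ℤ | y ≡ a [ZMOD (t : ℤ)]} ∩ Set.Ico x q).ncard : ℤ) := by
  have hIco : (({y : ℤ | y ≡ a [ZMOD (t : ℤ)]} ∩ Set.Ico x q)).Finite :=
    Set.Finite.subset (Set.finite_Ico x q) (Set.inter_subset_right)
  have hbx : beadsSet B t a x = beadsSet B t a q ∪
      (B ∩ ({y : ℤ | y ≡ a [ZMOD (t : ℤ)]} ∩ Set.Ico x q)) := by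
    ext b
    simp only [beadsSet, Set.mem_setOf_eq, Set.mem_union, Set.mem_inter_iff, Set.mem_Ico]
    constructor
    · rintro ⟨h1, h2, h3⟩
      rcases le_or_gt q b with h | h
      · exact Or.inl ⟨h1, h2, h⟩
      · exact Or.inr ⟨h1, h2, h3, h⟩
    · rintro (⟨h1, h2, h3⟩ | ⟨h1, h2, h3, h4⟩)
      · exact ⟨h1, h2, le_trans hxq h3⟩
      · exact ⟨h1, h2, h3⟩
  have hgq : gapsSet B t a q = gapsSet B t a x ∪
      (Bᶜ ∩ ({y : ℤ | y ≡ a [ZMOD (t : ℤ)]} ∩ Set.Ico x q)) := by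
    ext y
    simp only [gapsSet, Set.mem_setOf_eq, Set.mem_union, Set.mem_inter_iff, Set.mem_Ico,
      Set.mem_compl_iff]
    constructor
    · rintro ⟨h1, h2, h3⟩
      rcases lt_or_ge y x with h | h
      · exact Or.inl ⟨h1, h2, h⟩
      · exact Or.inr ⟨h1, h2, h, h3⟩
    · rintro (⟨h1, h2, h3⟩ | ⟨h1, h2, h3, h4⟩)
      · exact ⟨h1, h2, lt_of_lt_of_le h3 hxq⟩
      · exact ⟨h1, h2, h4⟩
  have hsplit : ({y : ℤ | y ≡ a [ZMOD (t : ℤ)]} ∩ Set.Ico x q) =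
      (B ∩ ({y : ℤ | y ≡ a [ZMOD (t : ℤ)]} ∩ Set.Ico x q)) ∪
      (Bᶜ ∩ ({y : ℤ | y ≡ a [ZMOD (t : ℤ)]} ∩ Set.Ico x q)) := by
    rw [← Set.union_inter_distrib_right, Set.union_compl_self, Set.univ_inter]
  have d1 : Disjoint (beadsSet B t a q)
      (B ∩ ({y : ℤ | y ≡ a [ZMOD (t : ℤ)]} ∩ Set.Ico x q)) := by
    rw [Set.disjoint_left]
    rintro b ⟨-, -, h1⟩ ⟨-, -, -, h2⟩
    omega
  have d2 : Disjoint (gapsSet B t a x)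
      (Bᶜ ∩ ({y : ℤ | y ≡ a [ZMOD (t : ℤ)]} ∩ Set.Ico x q)) := by
    rw [Set.disjoint_left]
    rintro y ⟨-, -, h1⟩ ⟨-, -, h2, -⟩
    omega
  have d3 : Disjoint (B ∩ ({y : ℤ | y ≡ a [ZMOD (t : ℤ)]} ∩ Set.Ico x q))
      (Bᶜ ∩ ({y : ℤ | y ≡ a [ZMOD (t : ℤ)]} ∩ Set.Ico x q)) := by
    rw [Set.disjoint_left]
    rintro y ⟨h1, -⟩ ⟨h2, -⟩
    exact h2 h1
  have e1 := Set.ncard_union_eq d1 (finite_beads hB t a q)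
    (hIco.subset Set.inter_subset_right)
  have e2 := Set.ncard_union_eq d2 (finite_gaps hB t a x)
    (hIco.subset Set.inter_subset_right)
  have e3 := Set.ncard_union_eq d3 (hIco.subset Set.inter_subset_right)
    (hIco.subset Set.inter_subset_right)
  rw [← hsplit] at e3
  rw [Hfn, Hfn, hbx, e1, hgq, e2, e3]
  push_cast
  ring

lemma mem_coreBeta_le {B : Set ℤ} (hB : Ok B) {t : ℕ} {x : ℤ} (hx : x ∈ coreBeta t B) :
    ∃ b ∈ B, x ≤ b := by
  rw [mem_coreBeta] at hx
  have h : (beadsSet B t x x).Nonempty := by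
    rw [← Set.ncard_pos (finite_beads hB t x x)]
    unfold Hfn at hx; omega
  obtain ⟨b, hb, -, hxb⟩ := h
  exact ⟨b, hb, hxb⟩

lemma Ok_coreBeta {B : Set ℤ} (hB : Ok B) (t : ℕ) : Ok (coreBeta t B) := by
  obtain ⟨⟨M, hM⟩, ⟨M', hM'⟩⟩ := hB
  constructor
  · refine ⟨M, fun x hx => ?_⟩
    rw [mem_coreBeta]
    have hg : gapsSet B t x x = ∅ := by
      ext y
      simp only [gapsSet, Set.mem_setOf_eq, Set.mem_empty_iff_false, iff_false]
      rintro ⟨hy, -, hyx⟩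
      exact hy (hM y (by omega))
    have hb : x ∈ beadsSet B t x x := ⟨hM x hx, Int.ModEq.refl x, le_refl x⟩
    have : 0 < (beadsSet B t x x).ncard := by
      rw [Set.ncard_pos (finite_beads ⟨⟨M, hM⟩, ⟨M', hM'⟩⟩ t x x)]
      exact ⟨x, hb⟩
    unfold Hfn
    rw [hg, Set.ncard_empty]
    omega
  · refine ⟨M', fun x hx hmem => ?_⟩
    obtain ⟨b, hb, hxb⟩ := mem_coreBeta_le ⟨⟨M, hM⟩, ⟨M', hM'⟩⟩ hmem
    exact hM' b (by omega) hb

lemma ncard_Iio (n : ℕ) : (Set.Iio n).ncard = n := by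
  rw [← Finset.coe_range, Set.ncard_coe_finset, Finset.card_range]

/-- the runner points in `[q - t*(k+1), q)` are exactly `q - t*(j+1)` for `j ≤ k`. -/
lemma runner_Ico_eq {t : ℕ} (ht : 0 < t) (q : ℤ) (k : ℕ) :
    {y : ℤ | y ≡ q [ZMOD (t : ℤ)]} ∩ Set.Ico (q - t * (k + 1 : ℕ)) q =
      (fun j : ℕ => q - t * (j + 1)) '' Set.Iio (k + 1) := by
  ext y
  simp only [Set.mem_inter_iff, Set.mem_setOf_eq, Set.mem_Ico, Set.mem_image, Set.mem_Iio]
  constructor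
  · rintro ⟨h1, h2, h3⟩
    obtain ⟨d, hd⟩ := Int.ModEq.dvd h1
    have ht' : (1 : ℤ) ≤ t := by exact_mod_cast ht
    have hd1 : 1 ≤ d := by nlinarith
    have hdk : d ≤ k + 1 := by push_cast at h2 ⊢; nlinarith
    refine ⟨(d - 1).toNat, by omega, ?_⟩
    push_cast [Int.toNat_of_nonneg (by omega : (0:ℤ) ≤ d - 1)]
    linarith
  · rintro ⟨j, hj, rfl⟩
    have ht' : (1 : ℤ) ≤ t := by exact_mod_cast ht
    have hj' : (j : ℤ) + 1 ≤ (k : ℤ) + 1 := by exact_mod_cast hj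
    refine ⟨?_, by push_cast; nlinarith, by nlinarith⟩
    exact Int.modEq_iff_dvd.mpr ⟨(j : ℤ) + 1, by ring⟩

lemma runner_Ico_ncard {t : ℕ} (ht : 0 < t) (q : ℤ) (k : ℕ) :
    ({y : ℤ | y ≡ q [ZMOD (t : ℤ)]} ∩ Set.Ico (q - t * (k + 1 : ℕ)) q).ncard = k + 1 := by
  rw [runner_Ico_eq ht q k, Set.ncard_image_of_injective _ (fun a b h => by simp at h; omega),
    ncard_Iio]

lemma runnerSet_congr {t : ℕ} {a q : ℤ} (h : a ≡ q [ZMOD (t : ℤ)]) :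
    {y : ℤ | y ≡ a [ZMOD (t : ℤ)]} = {y : ℤ | y ≡ q [ZMOD (t : ℤ)]} := by
  ext y
  exact ⟨fun hy => hy.trans h, fun hy => hy.trans h.symm⟩

/-- The crucial lemma: taking the `t`-core of a beta-like set preserves all the
bead/gap counting functions for modulus `t`. -/
lemma Hfn_coreBeta {B : Set ℤ} (hB : Ok B) {t : ℕ} (ht : 0 < t) (a x : ℤ) :
    Hfn (coreBeta t B) t a x = Hfn B t a x := by
  obtain ⟨M, hM⟩ := hB.2
  set C := coreBeta t B with hC
  have hOkC : Ok C := Ok_coreBeta hB t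
  -- choose a large q in the residue class of a
  set N : ℕ := (max (M - a) (x - a)).toNat with hN
  set q : ℤ := a + t * N with hq
  have ht' : (1 : ℤ) ≤ t := by exact_mod_cast ht
  have hqM : M ≤ q := by
    have : (M - a) ≤ (N : ℤ) := by rw [hN]; exact le_max_left _ _ |>.trans (Int.self_le_toNat _)
    nlinarith [Int.self_le_toNat (max (M - a) (x - a))]
  have hqx : x ≤ q := by
    have h1 : (x - a) ≤ (N : ℤ) := le_trans (le_max_right _ _) (Int.self_le_toNat _)
    nlinarith
  have haq : a ≡ q [ZMOD (t : ℤ)] := (Int.modEq_iff_dvd.mpr ⟨N, by rw [hq]; ring⟩)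
  have hBq : ∀ b ∈ B, b < q := fun b hb => by
    by_contra h
    exact hM b (by omega) hb
  have hCq : ∀ b ∈ C, b < q := fun b hb => by
    obtain ⟨y, hy, hby⟩ := mem_coreBeta_le hB hb
    exact lt_of_le_of_lt hby (hBq y hy)
  have hbeadsB : beadsSet B t a q = ∅ := by
    ext b
    simp only [beadsSet, Set.mem_setOf_eq, Set.mem_empty_iff_false, iff_false]
    rintro ⟨h1, -, h3⟩
    exact absurd (hBq b h1) (by omega)
  have hbeadsC : beadsSet C t a q = ∅ := by
    ext b
    simp only [beadsSet, Set.mem_setOf_eq, Set.mem_empty_iff_false, iff_false]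
    rintro ⟨h1, -, h3⟩
    exact absurd (hCq b h1) (by omega)
  set G : ℕ := (gapsSet B t a q).ncard with hG
  have hHBq : Hfn B t a q = -(G : ℤ) := by
    rw [Hfn, hbeadsB, Set.ncard_empty]; push_cast; ring
  -- the members of C on the runner of a below q
  have key : ∀ k : ℕ, ((q - t * ((k : ℤ) + 1)) ∈ C ↔ G ≤ k) := by
    intro k
    have hek : q - t * ((k : ℤ) + 1) ≡ a [ZMOD (t : ℤ)] :=
      (Int.modEq_iff_dvd.mpr ⟨(k:ℤ) + 1, by ring⟩).trans haq.symm
    rw [hC, mem_coreBeta, Hfn_congr hek, Hfn_step hB t a (by nlinarith : q - t * ((k : ℤ) + 1) ≤ q),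
      hHBq, runnerSet_congr haq]
    have : ({y : ℤ | y ≡ q [ZMOD (t : ℤ)]} ∩ Set.Ico (q - t * ((k : ℤ) + 1)) q).ncard = k + 1 := by
      have := runner_Ico_ncard ht q k
      rw [show ((k : ℤ) + 1) = ((k + 1 : ℕ) : ℤ) by push_cast; ring]
      exact this
    rw [this]
    omega
  have hgapsC : gapsSet C t a q = (fun j : ℕ => q - t * ((j : ℤ) + 1)) '' Set.Iio G := by
    ext y
    simp only [gapsSet, Set.mem_setOf_eq, Set.mem_image, Set.mem_Iio]
    constructor
    · rintro ⟨h1, h2, h3⟩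
      obtain ⟨d, hd⟩ := Int.ModEq.dvd (h2.trans haq)
      have hd1 : 1 ≤ d := by nlinarith
      have hdd : (t:ℤ) * (d - 1 + 1) = t * d := by ring
      refine ⟨(d - 1).toNat, ?_, ?_⟩
      · by_contra h
        push_neg at h
        have : G ≤ (d-1).toNat := h
        have := (key (d - 1).toNat).mpr this
        rw [Int.toNat_of_nonneg (by omega : (0:ℤ) ≤ d - 1)] at this
        rw [show q - (t:ℤ) * (d - 1 + 1) = y by omega] at this
        exact h1 this
      · rw [Int.toNat_of_nonneg (by omega : (0:ℤ) ≤ d - 1)]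
        omega
    · rintro ⟨k, hk, rfl⟩
      have hek : q - t * ((k : ℤ) + 1) ≡ a [ZMOD (t : ℤ)] :=
        (Int.modEq_iff_dvd.mpr ⟨(k:ℤ) + 1, by ring⟩).trans haq.symm
      refine ⟨fun h => absurd ((key k).mp h) (by omega), hek, by nlinarith⟩
  have hGC : (gapsSet C t a q).ncard = G := by
    rw [hgapsC, Set.ncard_image_of_injective _ (fun a b h => by simp at h; omega), ncard_Iio]
  have hHCq : Hfn C t a q = -(G : ℤ) := by
    rw [Hfn, hbeadsC, Set.ncard_empty, hGC]; push_cast; ring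
  rw [Hfn_step hB t a hqx, Hfn_step hOkC t a hqx, hHBq, hHCq]

lemma ncard_biUnion {α ι : Type*} (F : Finset ι) (f : ι → Set α)
    (hfin : ∀ i ∈ F, (f i).Finite)
    (hdisj : ∀ i ∈ F, ∀ j ∈ F, i ≠ j → Disjoint (f i) (f j)) :
    (⋃ i ∈ F, f i).ncard = ∑ i ∈ F, (f i).ncard := by
  classical
  induction F using Finset.induction_on with
  | empty => simp
  | @insert i F' hni ih =>
    have hfin2 : (⋃ x ∈ F', f x).Finite := by
      rw [← Finset.set_biUnion_coe]
      exact Set.Finite.biUnion F'.finite_toSet (fun j hj => hfin j (Finset.mem_insert_of_mem hj))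
    have hdisj2 : Disjoint (f i) (⋃ x ∈ F', f x) := by
      simp only [Set.disjoint_iUnion_right]
      exact fun j hj => hdisj i (Finset.mem_insert_self i F') j (Finset.mem_insert_of_mem hj)
        (fun h => hni (h ▸ hj))
    rw [Finset.set_biUnion_insert, Finset.sum_insert hni,
      Set.ncard_union_eq hdisj2 (hfin i (Finset.mem_insert_self i F')) hfin2,
      ih (fun j hj => hfin j (Finset.mem_insert_of_mem hj))
        (fun j hj k hk hjk => hdisj j (Finset.mem_insert_of_mem hj) k
          (Finset.mem_insert_of_mem hk) hjk)]

lemma modEq_split {s r : ℕ} (hs : 0 < s) (hr : 0 < r) (a b : ℤ) :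
    b ≡ a [ZMOD (s : ℤ)] ↔
      ∃ k : ℕ, k < r ∧ b ≡ a + k * s [ZMOD ((r * s : ℕ) : ℤ)] := by
  have hs' : (0:ℤ) < s := by exact_mod_cast hs
  have hr' : (0:ℤ) < r := by exact_mod_cast hr
  constructor
  · intro h
    obtain ⟨m, hm⟩ := Int.ModEq.dvd h
    refine ⟨((-m) % r).toNat, ?_, ?_⟩
    · have h1 : (-m) % r < r := Int.emod_lt_of_pos _ hr'
      have h2 : 0 ≤ (-m) % r := Int.emod_nonneg _ (by omega)
      omega
    · rw [Int.modEq_iff_dvd]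
      have h2 : 0 ≤ (-m) % r := Int.emod_nonneg _ (by omega)
      rw [Int.toNat_of_nonneg h2]
      have h3 : (r:ℤ) ∣ m + (-m) % r := by
        have := Int.mul_ediv_add_emod (-m) r
        exact ⟨-((-m) / r), by linarith⟩
      obtain ⟨u, hu⟩ := h3
      refine ⟨u, ?_⟩
      push_cast
      linear_combination hm + (s:ℤ) * hu
  · rintro ⟨k, hk, h⟩
    obtain ⟨m, hm⟩ := Int.ModEq.dvd h
    rw [Int.modEq_iff_dvd]
    push_cast at hm
    exact ⟨r * m - k, by linarith [hm]⟩

lemma modEq_unique {s r : ℕ} (hs : 0 < s) (hr : 0 < r) (a b : ℤ) {k k' : ℕ}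
    (hk : k < r) (hk' : k' < r)
    (h1 : b ≡ a + k * s [ZMOD ((r * s : ℕ) : ℤ)])
    (h2 : b ≡ a + k' * s [ZMOD ((r * s : ℕ) : ℤ)]) : k = k' := by
  have h := (h1.symm.trans h2)
  obtain ⟨m, hm⟩ := Int.ModEq.dvd h
  push_cast at hm
  have hs' : (0:ℤ) < s := by exact_mod_cast hs
  have : ((k':ℤ) - k) * s = (r * m) * s := by linarith [hm]
  have hkk : (k':ℤ) - k = r * m := by
    have := mul_right_cancel₀ (by omega : (s:ℤ) ≠ 0) this
    exact this
  have hr' : (0:ℤ) < r := by exact_mod_cast hr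
  have hkr : (k:ℤ) < r := by exact_mod_cast hk
  have hkr' : (k':ℤ) < r := by exact_mod_cast hk'
  rcases lt_trichotomy m 0 with h | h | h
  · have : (r:ℤ) * m ≤ -r := by nlinarith
    omega
  · rw [h, mul_zero] at hkk
    omega
  · have : (r:ℤ) ≤ r * m := by nlinarith
    omega

lemma Hfn_decomp {B : Set ℤ} (hB : Ok B) {s r : ℕ} (hs : 0 < s) (hr : 0 < r) (a x : ℤ) :
    Hfn B s a x = ∑ k ∈ Finset.range r, Hfn B (r * s) (a + k * s) x := by
  have hbead : beadsSet B s a x = ⋃ k ∈ Finset.range r, beadsSet B (r * s) (a + k * s) x := by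
    ext b
    simp only [beadsSet, Set.mem_setOf_eq, Set.mem_iUnion, Finset.mem_range, exists_prop]
    constructor
    · rintro ⟨h1, h2, h3⟩
      obtain ⟨k, hk, hbk⟩ := (modEq_split hs hr a b).mp h2
      exact ⟨k, hk, h1, hbk, h3⟩
    · rintro ⟨k, hk, h1, h2, h3⟩
      exact ⟨h1, (modEq_split hs hr a b).mpr ⟨k, hk, h2⟩, h3⟩
  have hgap : gapsSet B s a x = ⋃ k ∈ Finset.range r, gapsSet B (r * s) (a + k * s) x := by
    ext b
    simp only [gapsSet, Set.mem_setOf_eq, Set.mem_iUnion, Finset.mem_range, exists_prop]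
    constructor
    · rintro ⟨h1, h2, h3⟩
      obtain ⟨k, hk, hbk⟩ := (modEq_split hs hr a b).mp h2
      exact ⟨k, hk, h1, hbk, h3⟩
    · rintro ⟨k, hk, h1, h2, h3⟩
      exact ⟨h1, (modEq_split hs hr a b).mpr ⟨k, hk, h2⟩, h3⟩
  have hbc : (beadsSet B s a x).ncard
      = ∑ k ∈ Finset.range r, (beadsSet B (r * s) (a + k * s) x).ncard := by
    rw [hbead]
    apply ncard_biUnion
    · exact fun k _ => finite_beads hB _ _ _
    · intro i hi j hj hij
      rw [Set.disjoint_left]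
      rintro b ⟨-, h1, -⟩ ⟨-, h2, -⟩
      exact hij (modEq_unique hs hr a b (Finset.mem_range.mp hi) (Finset.mem_range.mp hj) h1 h2)
  have hgc : (gapsSet B s a x).ncard
      = ∑ k ∈ Finset.range r, (gapsSet B (r * s) (a + k * s) x).ncard := by
    rw [hgap]
    apply ncard_biUnion
    · exact fun k _ => finite_gaps hB _ _ _
    · intro i hi j hj hij
      rw [Set.disjoint_left]
      rintro b ⟨-, h1, -⟩ ⟨-, h2, -⟩
      exact hij (modEq_unique hs hr a b (Finset.mem_range.mp hi) (Finset.mem_range.mp hj) h1 h2)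
  unfold Hfn
  rw [hbc, hgc]
  push_cast
  rw [Finset.sum_sub_distrib]

/-- greatest element of a set of integers (junk value if none) -/
noncomputable def gmax (S : Set ℤ) : ℤ :=
  if h : ∃ m, m ∈ S ∧ ∀ z ∈ S, z ≤ m then h.choose else 0

lemma gmax_spec {S : Set ℤ} (hne : S.Nonempty) (hbd : ∃ b : ℤ, ∀ z ∈ S, z ≤ b) :
    gmax S ∈ S ∧ ∀ z ∈ S, z ≤ gmax S := by
  have h : ∃ m, m ∈ S ∧ ∀ z ∈ S, z ≤ m := by
    obtain ⟨b, hb⟩ := hbd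
    obtain ⟨m, hm1, hm2⟩ := Int.exists_greatest_of_bdd
      (P := fun z => z ∈ S) ⟨b, fun z hz => hb z hz⟩ hne
    exact ⟨m, hm1, hm2⟩
  rw [gmax, dif_pos h]
  exact h.choose_spec

/-- the decreasing enumeration of a beta-like set -/
noncomputable def gseq (B : Set ℤ) : ℕ → ℤ
  | 0 => gmax B
  | n + 1 => gmax (B ∩ Set.Iio (gseq B n))

section construction

variable {B : Set ℤ} (hB : Ok B)
include hB

lemma Ok.lower_mem (x : ℤ) : (B ∩ Set.Iio x).Nonempty := by
  obtain ⟨M, hM⟩ := hB.1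
  exact ⟨min M (x - 1), hM _ (min_le_left _ _), by simp only [Set.mem_Iio]; omega⟩

lemma Ok.bdd : ∃ b : ℤ, ∀ z ∈ B, z ≤ b := by
  obtain ⟨M, hM⟩ := hB.2
  exact ⟨M, fun z hz => by by_contra h; exact hM z (by omega) hz⟩

lemma gseq_zero_spec : gmax B ∈ B ∧ ∀ z ∈ B, z ≤ gmax B :=
  gmax_spec ((Ok.lower_mem hB 0).mono Set.inter_subset_left |>.mono (le_refl _)) (Ok.bdd hB)

lemma gseq_succ_spec (n : ℕ) :
    gseq B (n + 1) ∈ B ∧ gseq B (n + 1) < gseq B n ∧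
      ∀ b ∈ B, b < gseq B n → b ≤ gseq B (n + 1) := by
  have h := gmax_spec (Ok.lower_mem hB (gseq B n))
    (by obtain ⟨b, hb⟩ := Ok.bdd hB; exact ⟨b, fun z hz => hb z hz.1⟩)
  exact ⟨h.1.1, h.1.2, fun b hb hlt => h.2 b ⟨hb, hlt⟩⟩

lemma gseq_mem (n : ℕ) : gseq B n ∈ B := by
  cases n with
  | zero => exact (gseq_zero_spec hB).1
  | succ m => exact (gseq_succ_spec hB m).1

lemma gseq_le (n : ℕ) : gseq B n ≤ gseq B 0 - n := by
  induction n with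
  | zero => simp [gseq]
  | succ m ih =>
    have := (gseq_succ_spec hB m).2.1
    push_cast
    omega

lemma gseq_anti {m n : ℕ} (h : m ≤ n) : gseq B n ≤ gseq B m := by
  induction n with
  | zero => simp_all
  | succ k ih =>
    rcases Nat.lt_or_ge m (k+1) with h' | h'
    · exact le_trans (le_of_lt (gseq_succ_spec hB k).2.1) (ih (by omega))
    · have : m = k + 1 := by omega
      subst this; rfl

lemma gseq_surj {b : ℤ} (hb : b ∈ B) : ∃ n, gseq B n = b := by
  have hP : ∃ n : ℕ, gseq B n ≤ b := by
    refine ⟨(gseq B 0 - b).toNat, ?_⟩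
    have := gseq_le hB (gseq B 0 - b).toNat
    omega
  set n := Nat.find hP with hn
  have hle : gseq B n ≤ b := Nat.find_spec hP
  rcases eq_or_lt_of_le hle with h | h
  · exact ⟨n, h⟩
  · exfalso
    cases hnn : n with
    | zero =>
      have := (gseq_zero_spec hB).2 b hb
      rw [hnn] at h
      simp only [gseq] at h
      omega
    | succ m =>
      have hmin : ¬ gseq B m ≤ b := Nat.find_min hP (by omega)
      have := (gseq_succ_spec hB m).2.2 b hb (by omega)
      rw [hnn] at h
      omega

lemma exists_partition_of_Ok : ∃ l : BetaPartition, ∃ r : ℤ, beta r l = B := by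
  classical
  obtain ⟨ML, hML⟩ := hB.1
  set F : ℕ → ℕ := fun n => (gapsSet B 1 0 (gseq B n)).ncard with hF
  have hgapssub : ∀ m n : ℕ, m ≤ n →
      gapsSet B 1 0 (gseq B n) ⊆ gapsSet B 1 0 (gseq B m) := by
    intro m n hmn y hy
    exact ⟨hy.1, hy.2.1, lt_of_lt_of_le hy.2.2 (gseq_anti hB hmn)⟩
  have hanti : ∀ ⦃m n : ℕ⦄, m ≤ n → F n ≤ F m := fun m n hmn =>
    Set.ncard_le_ncard (hgapssub m n hmn) (finite_gaps hB 1 0 (gseq B m))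
  have hev : ∃ N : ℕ, ∀ n, N ≤ n → F n = 0 := by
    refine ⟨(gseq B 0 - ML - 1).toNat, fun n hn => ?_⟩
    have h1 : gseq B n ≤ ML + 1 := by
      have := gseq_le hB n
      omega
    have h2 : gapsSet B 1 0 (gseq B n) = ∅ := by
      ext y
      simp only [gapsSet, Set.mem_setOf_eq, Set.mem_empty_iff_false, iff_false]
      rintro ⟨hy, -, hlt⟩
      exact hy (hML y (by omega))
    rw [hF]
    simp [h2]
  set l : BetaPartition := ⟨F, hanti, hev⟩ with hl
  have hstep : ∀ n : ℕ, (F n : ℤ) = F (n + 1) + (gseq B n - gseq B (n + 1) - 1) := by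
    intro n
    have hsplit : gapsSet B 1 0 (gseq B n) =
        gapsSet B 1 0 (gseq B (n + 1)) ∪ (Set.Ioo (gseq B (n + 1)) (gseq B n)) := by
      ext y
      simp only [gapsSet, Set.mem_setOf_eq, Set.mem_union, Set.mem_Ioo]
      constructor
      · rintro ⟨h1, h2, h3⟩
        rcases lt_or_ge y (gseq B (n + 1)) with h | h
        · exact Or.inl ⟨h1, h2, h⟩
        · rcases eq_or_lt_of_le h with h' | h'
          · exact absurd (h' ▸ gseq_mem hB (n + 1)) h1
          · exact Or.inr ⟨h', h3⟩
      · rintro (⟨h1, h2, h3⟩ | ⟨h1, h2⟩)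
        · exact ⟨h1, h2, lt_of_lt_of_le h3 (le_of_lt (gseq_succ_spec hB n).2.1)⟩
        · refine ⟨fun hyB => ?_, Int.modEq_one, h2⟩
          exact absurd ((gseq_succ_spec hB n).2.2 y hyB h2) (by omega)
    have hdisj : Disjoint (gapsSet B 1 0 (gseq B (n + 1)))
        (Set.Ioo (gseq B (n + 1)) (gseq B n)) := by
      rw [Set.disjoint_left]
      rintro y ⟨-, -, h1⟩ ⟨h2, -⟩
      omega
    have hcard : (Set.Ioo (gseq B (n + 1)) (gseq B n)).ncard
        = (gseq B n - gseq B (n + 1) - 1).toNat := by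
      rw [← Finset.coe_Ioo, Set.ncard_coe_finset, Int.card_Ioo]
    have hu := Set.ncard_union_eq hdisj (finite_gaps hB 1 0 (gseq B (n + 1)))
      (Set.Finite.subset (Set.finite_Ioo _ _) (le_refl _))
    rw [← hsplit, hcard] at hu
    have hlt := (gseq_succ_spec hB n).2.1
    rw [hF]
    simp only []
    push_cast [hu]
    omega
  set r : ℤ := gseq B 0 - F 0 + 1 with hr
  have hgen : ∀ n : ℕ, (F n : ℤ) - (n + 1) + r = gseq B n := by
    intro n
    induction n with
    | zero => rw [hr]; push_cast; ring
    | succ m ih =>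
      have := hstep m
      push_cast
      push_cast at ih
      linarith
  refine ⟨l, r, ?_⟩
  ext x
  constructor
  · rintro ⟨n, rfl⟩
    rw [show (l.f n : ℤ) = (F n : ℤ) from rfl, hgen n]
    exact gseq_mem hB n
  · intro hx
    obtain ⟨n, hn⟩ := gseq_surj hB hx
    exact ⟨n, by rw [show (l.f n : ℤ) = (F n : ℤ) from rfl, hgen n, hn]⟩

end construction

lemma beta_mem {r : ℤ} {l : BetaPartition} {x : ℤ} :
    x ∈ beta r l ↔ ∃ n : ℕ, x = (l.f n : ℤ) - (n + 1) + r := Iff.rfl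

lemma Ok_beta (r : ℤ) (l : BetaPartition) : Ok (beta r l) := by
  obtain ⟨N, hN⟩ := l.eventually_zero
  constructor
  · refine ⟨r - N - 1, fun x hx => ?_⟩
    refine ⟨(r - x - 1).toNat, ?_⟩
    have h1 : (N : ℤ) ≤ (r - x - 1).toNat := by omega
    have h2 : l.f (r - x - 1).toNat = 0 := hN _ (by exact_mod_cast h1)
    rw [h2]
    push_cast
    omega
  · refine ⟨l.f 0 + r, fun x hx hmem => ?_⟩
    obtain ⟨n, rfl⟩ := hmem
    have := l.antitone (Nat.zero_le n)
    omega

/-- injectivity: a beta-set determines the partition. -/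
lemma beta_inj {l l' : BetaPartition} {r r' : ℤ} (h : beta r l = beta r' l') : l = l' := by
  set x : ℕ → ℤ := fun n => (l.f n : ℤ) - (n + 1) + r with hx
  set x' : ℕ → ℤ := fun n => (l'.f n : ℤ) - (n + 1) + r' with hx'
  have hanti : ∀ {m n : ℕ}, m < n → x n < x m := by
    intro m n hmn
    have := l.antitone (le_of_lt hmn)
    simp only [hx]
    omega
  have hanti' : ∀ {m n : ℕ}, m < n → x' n < x' m := by
    intro m n hmn
    have := l'.antitone (le_of_lt hmn)
    simp only [hx']
    omega
  have hrange : Set.range x = beta r l := by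
    ext z
    simp only [Set.range, Set.mem_setOf_eq, beta_mem, hx]
    constructor
    · rintro ⟨n, rfl⟩; exact ⟨n, rfl⟩
    · rintro ⟨n, rfl⟩; exact ⟨n, rfl⟩
  have hrange' : Set.range x' = beta r' l' := by
    ext z
    simp only [Set.range, Set.mem_setOf_eq, beta_mem, hx']
    constructor
    · rintro ⟨n, rfl⟩; exact ⟨n, rfl⟩
    · rintro ⟨n, rfl⟩; exact ⟨n, rfl⟩
  have hR : Set.range x = Set.range x' := by rw [hrange, hrange', h]
  -- counting: the set of elements above x n has exactly n elements
  have hcount : ∀ (y : ℕ → ℤ), (∀ {m n : ℕ}, m < n → y n < y m) →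
      ∀ n : ℕ, {z | z ∈ Set.range y ∧ y n < z} = y '' Set.Iio n := by
    intro y hy n
    ext z
    simp only [Set.mem_setOf_eq, Set.mem_image, Set.mem_Iio, Set.mem_range]
    constructor
    · rintro ⟨⟨m, rfl⟩, hlt⟩
      refine ⟨m, ?_, rfl⟩
      by_contra hmn
      push_neg at hmn
      rcases eq_or_lt_of_le hmn with h' | h'
      · rw [h'] at hlt; omega
      · have := hy h'
        omega
    · rintro ⟨m, hm, rfl⟩
      exact ⟨⟨m, rfl⟩, hy hm⟩
  have hinj : ∀ (y : ℕ → ℤ), (∀ {m n : ℕ}, m < n → y n < y m) → Function.Injective y := by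
    intro y hy a b hab
    by_contra hne
    rcases Nat.lt_or_ge a b with h | h
    · have := hy h; omega
    · have := hy (lt_of_le_of_ne h (Ne.symm hne)); omega
  have hncount : ∀ n : ℕ, {z | z ∈ Set.range x ∧ x n < z}.ncard = n := by
    intro n
    rw [hcount x hanti n, Set.ncard_image_of_injective _ (hinj x hanti), ncard_Iio]
  have hncount' : ∀ n : ℕ, {z | z ∈ Set.range x' ∧ x' n < z}.ncard = n := by
    intro n
    rw [hcount x' hanti' n, Set.ncard_image_of_injective _ (hinj x' hanti'), ncard_Iio]
  have heq : ∀ n : ℕ, x n = x' n := by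
    intro n
    by_contra hne
    -- wlog via a symmetric argument
    have key : ∀ (y y' : ℕ → ℤ), (∀ {m n : ℕ}, m < n → y n < y m) →
        (∀ {m n : ℕ}, m < n → y' n < y' m) → Set.range y = Set.range y' →
        ∀ n : ℕ, ¬ (y n < y' n) := by
      intro y y' hy hy' hRR n hlt
      have h1 : {z | z ∈ Set.range y ∧ y n < z}.ncard = n := by
        rw [hcount y hy n, Set.ncard_image_of_injective _ (hinj y hy), ncard_Iio]
      have h2 : {z | z ∈ Set.range y' ∧ y' n < z}.ncard = n := by
        rw [hcount y' hy' n, Set.ncard_image_of_injective _ (hinj y' hy'), ncard_Iio]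
      have hsub : insert (y' n) {z | z ∈ Set.range y' ∧ y' n < z} ⊆
          {z | z ∈ Set.range y ∧ y n < z} := by
        rintro z (rfl | ⟨hz1, hz2⟩)
        · exact ⟨by rw [hRR]; exact ⟨n, rfl⟩, hlt⟩
        · exact ⟨by rw [hRR]; exact hz1, lt_trans hlt hz2⟩
      have hfin : {z | z ∈ Set.range y ∧ y n < z}.Finite := by
        rw [hcount y hy n]
        exact Set.Finite.image _ (Set.finite_Iio _)
      have hfin' : {z | z ∈ Set.range y' ∧ y' n < z}.Finite := by
        rw [hcount y' hy' n]
        exact Set.Finite.image _ (Set.finite_Iio _)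
      have hni : y' n ∉ {z | z ∈ Set.range y' ∧ y' n < z} := by
        rintro ⟨-, hz⟩; omega
      have := Set.ncard_le_ncard hsub hfin
      rw [Set.ncard_insert_of_notMem hni hfin', h1, h2] at this
      omega
    rcases lt_or_gt_of_ne hne with h' | h'
    · exact key x x' hanti hanti' hR n h'
    · exact key x' x hanti' hanti hR.symm n h'
  -- deduce r = r' and f = f'
  obtain ⟨N, hN⟩ := l.eventually_zero
  obtain ⟨N', hN'⟩ := l'.eventually_zero
  have hrr : r = r' := by
    have h1 := heq (max N N')
    simp only [hx, hx'] at h1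
    rw [hN _ (le_max_left _ _), hN' _ (le_max_right _ _)] at h1
    push_cast at h1
    omega
  have hff : ∀ n, l.f n = l'.f n := by
    intro n
    have h1 := heq n
    simp only [hx, hx', hrr] at h1
    omega
  cases l with
  | mk f a e =>
    cases l' with
    | mk f' a' e' =>
      simp only [BetaPartition.mk.injEq]
      exact funext hff

lemma ofBeta_beta {B : Set ℤ} (hB : Ok B) : ∃ r : ℤ, beta r (ofBeta B) = B := by
  have h : ∃ l : BetaPartition, ∃ r : ℤ, beta r l = B := exists_partition_of_Ok hB
  rw [ofBeta, dif_pos h]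
  exact h.choose_spec

lemma ofBeta_beta_zero (l : BetaPartition) : ofBeta (beta 0 l) = l := by
  obtain ⟨r, hr⟩ := ofBeta_beta (Ok_beta 0 l)
  exact beta_inj hr

lemma beta_shift (r c : ℤ) (l : BetaPartition) :
    beta (r + c) l = (fun z => z + c) '' beta r l := by
  ext z
  simp only [beta_mem, Set.mem_image]
  constructor
  · rintro ⟨n, rfl⟩
    exact ⟨(l.f n : ℤ) - (n + 1) + r, ⟨n, rfl⟩, by ring⟩
  · rintro ⟨w, ⟨n, rfl⟩, rfl⟩
    exact ⟨n, by ring⟩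

lemma Ok_shift {B : Set ℤ} (hB : Ok B) (c : ℤ) : Ok ((fun z => z + c) '' B) := by
  obtain ⟨⟨M, hM⟩, ⟨M', hM'⟩⟩ := hB
  constructor
  · exact ⟨M + c, fun x hx => ⟨x - c, hM _ (by omega), by ring⟩⟩
  · refine ⟨M' + c, fun x hx hmem => ?_⟩
    obtain ⟨w, hw, hwx⟩ := hmem
    rw [show (fun z => z + c) w = w + c from rfl] at hwx
    exact hM' w (by omega) hw

lemma ofBeta_shift {B : Set ℤ} (hB : Ok B) (c : ℤ) :
    ofBeta ((fun z => z + c) '' B) = ofBeta B := by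
  obtain ⟨r1, h1⟩ := ofBeta_beta hB
  obtain ⟨r2, h2⟩ := ofBeta_beta (Ok_shift hB c)
  have h3 : beta r2 (ofBeta ((fun z => z + c) '' B)) = beta (r1 + c) (ofBeta B) := by
    rw [h2, beta_shift, h1]
  exact beta_inj h3

lemma coreBeta_shift (t : ℕ) (B : Set ℤ) (c : ℤ) :
    coreBeta t ((fun z => z + c) '' B) = (fun z => z + c) '' coreBeta t B := by
  have hbead : ∀ a x : ℤ, beadsSet ((fun z => z + c) '' B) t a x
      = (fun z => z + c) '' beadsSet B t (a - c) (x - c) := by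
    intro a x
    ext b
    simp only [beadsSet, Set.mem_setOf_eq, Set.mem_image]
    constructor
    · rintro ⟨⟨w, hw, rfl⟩, h2, h3⟩
      exact ⟨w, ⟨hw, by simpa using Int.ModEq.sub_right c h2, by omega⟩, rfl⟩
    · rintro ⟨w, ⟨hw, h2, h3⟩, rfl⟩
      refine ⟨⟨w, hw, rfl⟩, ?_, by omega⟩
      have := Int.ModEq.add_right c h2
      simpa using this
  have hgap : ∀ a x : ℤ, gapsSet ((fun z => z + c) '' B) t a x
      = (fun z => z + c) '' gapsSet B t (a - c) (x - c) := by
    intro a x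
    ext y
    simp only [gapsSet, Set.mem_setOf_eq, Set.mem_image]
    constructor
    · rintro ⟨h1, h2, h3⟩
      refine ⟨y - c, ⟨fun hc => h1 ⟨y - c, hc, by ring⟩, by simpa using Int.ModEq.sub_right c h2, by omega⟩, by ring⟩
    · rintro ⟨w, ⟨h1, h2, h3⟩, rfl⟩
      refine ⟨?_, ?_, by omega⟩
      · rintro ⟨w', hw', hww⟩
        exact h1 (by simpa [show w' = w by omega] using hw')
      · have := Int.ModEq.add_right c h2
        simpa using this
  ext z
  rw [coreBeta_eq, Set.mem_setOf_eq, hbead, hgap,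
    Set.ncard_image_of_injective _ (fun a b h => by simpa using h),
    Set.ncard_image_of_injective _ (fun a b h => by simpa using h)]
  constructor
  · intro h
    exact ⟨z - c, by rw [coreBeta_eq, Set.mem_setOf_eq]; exact h, by ring⟩
  · rintro ⟨w, hw, rfl⟩
    rw [coreBeta_eq, Set.mem_setOf_eq] at hw
    simpa using hw

lemma coreBeta_coreBeta {B : Set ℤ} (hB : Ok B) {r s : ℕ} (hr : 0 < r) (hs : 0 < s) :
    coreBeta s (coreBeta (r * s) B) = coreBeta s B := by
  ext x
  rw [mem_coreBeta, mem_coreBeta]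
  have h1 : Hfn (coreBeta (r * s) B) s x x = Hfn B s x x := by
    rw [Hfn_decomp (Ok_coreBeta hB (r * s)) hs hr x x, Hfn_decomp hB hs hr x x]
    exact Finset.sum_congr rfl (fun k _ => Hfn_coreBeta hB (Nat.mul_pos hr hs) _ _)
  rw [h1]

lemma core_core_eq {r s : ℕ} (hr : 0 < r) (hs : 0 < s) (l : BetaPartition) :
    core s (core (r * s) l) = core s l := by
  have hOkB : Ok (beta 0 l) := Ok_beta 0 l
  have hOkB1 : Ok (coreBeta (r * s) (beta 0 l)) := Ok_coreBeta hOkB _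
  obtain ⟨r₁, h₁⟩ := ofBeta_beta hOkB1
  have h2 : beta 0 (core (r * s) l) =
      (fun z => z + (-r₁)) '' (coreBeta (r * s) (beta 0 l)) := by
    rw [← h₁, ← beta_shift, add_neg_cancel]
    rfl
  calc core s (core (r * s) l)
      = ofBeta (coreBeta s (beta 0 (core (r * s) l))) := rfl
    _ = ofBeta (coreBeta s ((fun z => z + (-r₁)) '' coreBeta (r * s) (beta 0 l))) := by
        rw [h2]
    _ = ofBeta ((fun z => z + (-r₁)) '' coreBeta s (coreBeta (r * s) (beta 0 l))) := by
        rw [coreBeta_shift]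
    _ = ofBeta (coreBeta s (coreBeta (r * s) (beta 0 l))) :=
        ofBeta_shift (Ok_coreBeta hOkB1 s) _
    _ = ofBeta (coreBeta s (beta 0 l)) := by rw [coreBeta_coreBeta hOkB hr hs]
    _ = core s l := rfl

lemma coreBeta_eq_self_of_closed {B : Set ℤ} (hB : Ok B) (t : ℕ)
    (hcl : ∀ x y : ℤ, x ≤ y → x ≡ y [ZMOD (t : ℤ)] → y ∈ B → x ∈ B) :
    coreBeta t B = B := by
  ext x
  rw [coreBeta_eq, Set.mem_setOf_eq]
  by_cases hx : x ∈ B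
  · have hg : gapsSet B t x x = ∅ := by
      ext y
      simp only [gapsSet, Set.mem_setOf_eq, Set.mem_empty_iff_false, iff_false]
      rintro ⟨h1, h2, h3⟩
      exact h1 (hcl y x (le_of_lt h3) h2 hx)
    have hbne : 0 < (beadsSet B t x x).ncard := by
      rw [Set.ncard_pos (finite_beads hB t x x)]
      exact ⟨x, hx, Int.ModEq.refl x, le_refl x⟩
    rw [hg, Set.ncard_empty]
    simp only [hx, iff_true]
    exact hbne
  · have hb : beadsSet B t x x = ∅ := by
      ext b
      simp only [beadsSet, Set.mem_setOf_eq, Set.mem_empty_iff_false, iff_false]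
      rintro ⟨h1, h2, h3⟩
      exact hx (hcl x b h3 h2.symm h1)
    rw [hb, Set.ncard_empty]
    simpa using hx

lemma one_modEq (a b : ℤ) : a ≡ b [ZMOD ((1 : ℕ) : ℤ)] := by
  simp [Int.ModEq, Nat.cast_one, Int.emod_one]

lemma isCore_mul {r s : ℕ} (hr : 0 < r) (hs : 0 < s) {l : BetaPartition}
    (h : core s l = l) : core (r * s) l = l := by
  have hOkB : Ok (beta 0 l) := Ok_beta 0 l
  have hOkC : Ok (coreBeta s (beta 0 l)) := Ok_coreBeta hOkB s
  obtain ⟨r₁, h₁⟩ := ofBeta_beta hOkC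
  rw [show ofBeta (coreBeta s (beta 0 l)) = core s l from rfl, h] at h₁
  have hshift : coreBeta s (beta 0 l) = (fun z => z + r₁) '' beta 0 l := by
    rw [← h₁, ← beta_shift, zero_add]
  -- value of Hfn at large points
  have hHval : ∀ (X : Set ℤ) (M : ℤ), (∀ z : ℤ, M ≤ z → z ∉ X) → ∀ q, M ≤ q →
      Hfn X 1 0 q = -((gapsSet X 1 0 q).ncard : ℤ) := by
    intro X M hM q hq
    have hbe : beadsSet X 1 0 q = ∅ := by
      ext b
      simp only [beadsSet, Set.mem_setOf_eq, Set.mem_empty_iff_false, iff_false]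
      rintro ⟨h1, -, h3⟩
      exact hM b (le_trans hq h3) h1
    rw [Hfn, hbe, Set.ncard_empty]
    push_cast
    ring
  -- counting integers in an interval on the modulus-1 runner
  have hIcoN : ∀ q1 q2 : ℤ,
      ({y : ℤ | y ≡ (0 : ℤ) [ZMOD ((1 : ℕ) : ℤ)]} ∩ Set.Ico q1 q2).ncard
        = (q2 - q1).toNat := by
    intro q1 q2
    have : {y : ℤ | y ≡ (0 : ℤ) [ZMOD ((1 : ℕ) : ℤ)]} ∩ Set.Ico q1 q2 = Set.Ico q1 q2 := by
      ext y
      simp only [Set.mem_inter_iff, Set.mem_setOf_eq, and_iff_right_iff_imp]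
      exact fun _ => one_modEq y 0
    rw [this, ← Finset.coe_Ico, Set.ncard_coe_finset, Int.card_Ico]
  obtain ⟨MB, hMB⟩ := hOkB.2
  obtain ⟨MC, hMC⟩ := hOkC.2
  -- the window counting identity for B
  have hwin : ∀ q1 q2 : ℤ, MB ≤ q1 → q1 ≤ q2 →
      ((gapsSet (beta 0 l) 1 0 q2).ncard : ℤ)
        = ((gapsSet (beta 0 l) 1 0 q1).ncard : ℤ) + (q2 - q1) := by
    intro q1 q2 hm hle
    have hstep := Hfn_step hOkB 1 0 hle
    rw [hHval _ MB hMB q1 hm, hHval _ MB hMB q2 (le_trans hm hle), hIcoN] at hstep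
    omega
  -- equality of total gap counts
  have hA : ∀ x : ℤ, Hfn (coreBeta s (beta 0 l)) 1 0 x = Hfn (beta 0 l) 1 0 x := by
    intro x
    rw [Hfn_decomp hOkC one_pos hs 0 x, Hfn_decomp hOkB one_pos hs 0 x]
    refine Finset.sum_congr rfl (fun k _ => ?_)
    have := Hfn_coreBeta hOkB hs (0 + k * 1) x
    simpa [mul_one] using this
  set q : ℤ := max MB MC + r₁.natAbs with hq
  have hqMB : MB ≤ q := by omega
  have hqMC : MC ≤ q := by omega
  have hqr : MB ≤ q - r₁ := by omega
  -- e4 : gaps of C at q are shifted gaps of B at q - r₁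
  have e4 : gapsSet (coreBeta s (beta 0 l)) 1 0 q
      = (fun z => z + r₁) '' gapsSet (beta 0 l) 1 0 (q - r₁) := by
    rw [hshift]
    ext y
    simp only [gapsSet, Set.mem_setOf_eq, Set.mem_image]
    constructor
    · rintro ⟨h1, -, h3⟩
      refine ⟨y - r₁, ⟨fun hc => h1 ⟨y - r₁, hc, by ring⟩, one_modEq _ _, by omega⟩, by ring⟩
    · rintro ⟨w, ⟨h1, -, h3⟩, rfl⟩
      refine ⟨?_, one_modEq _ _, ?_⟩
      · rintro ⟨w', hw', heq⟩
        exact absurd (by rw [show w' = w by omega] at hw'; exact hw') h1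
      · omega
  have e4' : (gapsSet (coreBeta s (beta 0 l)) 1 0 q).ncard
      = (gapsSet (beta 0 l) 1 0 (q - r₁)).ncard := by
    rw [e4, Set.ncard_image_of_injective _ (fun a b hab => by simpa using hab)]
  have e1 := hA q
  rw [hHval _ MC hMC q hqMC, hHval _ MB hMB q hqMB, e4'] at e1
  -- conclude r₁ = 0
  have hr₁ : r₁ = 0 := by
    rcases le_total r₁ 0 with hc | hc
    · have := hwin q (q - r₁) hqMB (by omega)
      omega
    · have := hwin (q - r₁) q hqr (by omega)
      omega
  have hCB : coreBeta s (beta 0 l) = beta 0 l := by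
    rw [hshift, hr₁]
    simp
  -- B is downward closed along runners mod s, hence mod r*s
  have hclosed : ∀ x y : ℤ, x ≤ y → x ≡ y [ZMOD ((r * s : ℕ) : ℤ)] →
      y ∈ beta 0 l → x ∈ beta 0 l := by
    intro x y hxy hmod hy
    have hmods : x ≡ y [ZMOD (s : ℤ)] := by
      rw [Int.modEq_iff_dvd] at hmod ⊢
      exact dvd_trans ⟨r, by push_cast; ring⟩ hmod
    rw [← hCB, mem_coreBeta] at hy ⊢
    have hH : Hfn (beta 0 l) s x x = Hfn (beta 0 l) s y y
        + (({z : ℤ | z ≡ y [ZMOD (s : ℤ)]} ∩ Set.Ico x y).ncard : ℤ) := by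
      rw [Hfn_congr hmods, Hfn_step hOkB s y hxy]
    have hnn : (0 : ℤ) ≤ (({z : ℤ | z ≡ y [ZMOD (s : ℤ)]} ∩ Set.Ico x y).ncard : ℤ) := by
      positivity
    omega
  have hfinal : coreBeta (r * s) (beta 0 l) = beta 0 l :=
    coreBeta_eq_self_of_closed hOkB (r * s) hclosed
  show ofBeta (coreBeta (r * s) (beta 0 l)) = l
  rw [hfinal, ofBeta_beta_zero]

open BetaPartition in
/-- The `s`-core of `λ` equals the `s`-core of the `rs`-core of `λ`; in particular
every `s`-core is an `rs`-core. -/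
theorem core_core_mul (r s : ℕ) (hr : 0 < r) (hs : 0 < s) (l : BetaPartition) :
    core s l = core s (core (r * s) l) ∧ (IsCore s l → IsCore (r * s) l) := by
  constructor
  · exact (core_core_eq hr hs l).symm
  · intro h
    exact isCore_mul hr hs h
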